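/- Assume conditions (A1)-(A3) hold. There exist r̃₀ ∈ (0,1/2] and c > 0, depending only on the bounds in (A1)-(A3), such that for every x₀ ∈ ℝ^d, every r ∈ (0, r̃₀), every i ∈ M, and every x ∈ B(x₀, r/2), one has E_{x,i}( τ_{B(x₀,r)} ∧ τ₁ ) ≥ c r², where τ₁ = inf{t > 0 : Λ_t ≠ Λ₀} is the first switching time. -/

import Mathlib

open MeasureTheory Set Filter
open scoped ENNReal NNReal Classical

noncomputable section

/-- Euclidean space `ℝ^d`. -/
abbrev Rd (d : ℕ) := EuclideanSpace ℝ (Fin d)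

/-- The non-local operator
`L f(x) = Σ a_{kl} ∂²f/∂x_k∂x_l + Σ b_k ∂f/∂x_k + ∫ (f(x+z) − f(x) − ∇f(x)·z 1_{|z|<1}) π(x,dz)`. -/
def Lop {d : ℕ} (a : Rd d → Matrix (Fin d) (Fin d) ℝ) (b : Rd d → Rd d)
    (π : Rd d → Measure (Rd d)) (f : Rd d → ℝ) (x : Rd d) : ℝ :=
  (∑ k : Fin d, ∑ l : Fin d, a x k l *
      fderiv ℝ (fun y => fderiv ℝ f y (EuclideanSpace.single l (1:ℝ))) x
        (EuclideanSpace.single k (1:ℝ)))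
    + (∑ k : Fin d, b x k * fderiv ℝ f x (EuclideanSpace.single k (1:ℝ)))
    + ∫ z, (f (x + z) - f x - (if ‖z‖ < 1 then fderiv ℝ f x z else 0)) ∂(π x)

/-- The coefficient matrix `a(x,i) = σ(x,i) σ(x,i)'`. -/
def amat {d m : ℕ} (σm : Rd d → Fin m → Matrix (Fin d) (Fin d) ℝ) (x : Rd d) (i : Fin m) :
    Matrix (Fin d) (Fin d) ℝ :=
  σm x i * (σm x i).transpose

/-- The generator `G f(x,i) = L_i f(x,i) + Σ_j q_{ij}(x) f(x,j)` of the switching jump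
diffusion (with a possibly sub-Markovian matrix `Q(x) = (q_{ij}(x))`). -/
def Gop {d m : ℕ} (σm : Rd d → Fin m → Matrix (Fin d) (Fin d) ℝ)
    (b : Rd d → Fin m → Rd d) (π : Fin m → Rd d → Measure (Rd d))
    (q : Fin m → Fin m → Rd d → ℝ) (f : Rd d → Fin m → ℝ) (x : Rd d) (i : Fin m) : ℝ :=
  Lop (fun y => amat σm y i) (fun y => b y i) (π i) (fun y => f y i) x
    + ∑ j, q i j x * f x j

/-- The conservative (Markovian) generator `Ḡ` obtained from `G` by replacing `Q(x)` with the
Markovian matrix `Q̄(x)` (`q̄_{ij} = q_{ij}` for `i ≠ j`, rows summing to zero), cf. Remark 2.2: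
the process with sub-Markovian `Q` is the subprocess of the `Ḡ`-process killed at rate
`κ(x,i) = −Σ_j q_{ij}(x)`. -/
def Gbar {d m : ℕ} (σm : Rd d → Fin m → Matrix (Fin d) (Fin d) ℝ)
    (b : Rd d → Fin m → Rd d) (π : Fin m → Rd d → Measure (Rd d))
    (q : Fin m → Fin m → Rd d → ℝ) (f : Rd d → Fin m → ℝ) (x : Rd d) (i : Fin m) : ℝ :=
  Lop (fun y => amat σm y i) (fun y => b y i) (π i) (fun y => f y i) x
    + ∑ j ∈ Finset.univ.erase i, q i j x * (f x j - f x i)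

/-- The switched Markov process `(X_t, Λ_t)` associated with the generator `G`, under
conditions (A1)-(A3).  Following Remark 2.2, the underlying path process is conservative and
solves the martingale problem for the Markovian generator `Ḡ`; the (possibly sub-Markovian)
process itself is its subprocess killed at rate `κ(x,i) = −Σ_j q_{ij}(x)` (see `SwitchJD.life`
below). -/
structure SwitchJD (d m : ℕ) (Ω : Type) [mΩ : MeasurableSpace Ω] where
  X : ℝ → Ω → Rd d
  Λ : ℝ → Ω → Fin m
  P : Rd d → Fin m → Measure Ω
  F : Filtration ℝ≥0 mΩ
  σm : Rd d → Fin m → Matrix (Fin d) (Fin d) ℝ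
  b : Rd d → Fin m → Rd d
  π : Fin m → Rd d → Measure (Rd d)
  q : Fin m → Fin m → Rd d → ℝ
  isProb : ∀ x i, IsProbabilityMeasure (P x i)
  measX : ∀ t, Measurable (X t)
  measΛ : ∀ t, Measurable (Λ t)
  adapted : Adapted F (fun (t : ℝ≥0) ω => (X (t : ℝ) ω, Λ (t : ℝ) ω))
  start : ∀ x i, P x i {ω | X 0 ω = x ∧ Λ 0 ω = i} = 1
  right_cont : ∀ ω t, ContinuousWithinAt (fun s => X s ω) (Ici t) t
  left_lim : ∀ ω t, ∃ L, Tendsto (fun s => X s ω) (nhdsWithin t (Iio t)) (nhds L)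
  right_contΛ : ∀ ω t, ∃ ε > 0, ∀ s ∈ Ico t (t + ε), Λ s ω = Λ t ω
  A1σ_cont : ∀ i k l, Continuous fun x => σm x i k l
  A1σ_bdd : ∀ i, ∃ K : ℝ, ∀ x k l, |σm x i k l| ≤ K
  A1b_cont : ∀ i, Continuous fun x => b x i
  A1b_bdd : ∀ i, ∃ K : ℝ, ∀ x, ‖b x i‖ ≤ K
  A1q_meas : ∀ i j, Measurable (q i j)
  A1q_bdd : ∀ i j, ∃ K : ℝ, ∀ x, |q i j x| ≤ K
  q_nonneg : ∀ i j x, i ≠ j → 0 ≤ q i j x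
  q_row : ∀ i x, ∑ j, q i j x ≤ 0
  A2 : ∃ κ₀ : ℝ, 0 < κ₀ ∧ κ₀ ≤ 1 ∧ ∀ (x : Rd d) (i : Fin m) (ξ : Rd d),
      κ₀ * ‖ξ‖ ^ 2 ≤ ∑ k, ∑ l, amat σm x i k l * ξ k * ξ l ∧
      ∑ k, ∑ l, amat σm x i k l * ξ k * ξ l ≤ κ₀⁻¹ * ‖ξ‖ ^ 2
  A3 : ∃ Pi : Measure (Rd d), (∀ i x, π i x ≤ Pi) ∧
      ∫⁻ z, ENNReal.ofReal (min 1 (‖z‖ ^ 2)) ∂Pi < ⊤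
  mart : ∀ f : Rd d → Fin m → ℝ, (∀ i, ContDiff ℝ 2 fun x => f x i) →
      (∃ Kf : ℝ, ∀ x i, |f x i| + ‖fderiv ℝ (fun y => f y i) x‖ +
          ‖fderiv ℝ (fderiv ℝ fun y => f y i) x‖ ≤ Kf) →
      ∀ x i, Martingale
        (fun (t : ℝ≥0) ω => f (X (t : ℝ) ω) (Λ (t : ℝ) ω) -
          ∫ s in Ioc (0:ℝ) (t : ℝ), Gbar σm b π q f (X s ω) (Λ s ω))
        F (P x i)

/-- The standard exponential distribution (law of the auxiliary killing variable `η`). -/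
def expM : Measure ℝ :=
  (volume.restrict (Ioi (0:ℝ))).withDensity fun u => ENNReal.ofReal (Real.exp (-u))

/-- First exit time of `X` from `D` (with value `∞` if `X` never leaves `D`). -/
def exitT {d : ℕ} {Ω : Type} (X : ℝ → Ω → Rd d) (D : Set (Rd d)) (ω : Ω) : ℝ≥0∞ :=
  sInf (ENNReal.ofReal '' {t : ℝ | 0 ≤ t ∧ X t ω ∉ D})

variable {d m : ℕ} {Ω : Type} [MeasurableSpace Ω]

/-- The lifetime `ζ` of the switched process: the underlying conservative path `(X, Λ)` is
killed at rate `κ(x,i) = −Σ_j q_{ij}(x)`, using an independent mean-one exponential variable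
`η = p.2`. -/
def SwitchJD.life (S : SwitchJD d m Ω) (p : Ω × ℝ) : ℝ≥0∞ :=
  sInf (ENNReal.ofReal '' {t : ℝ | 0 < t ∧
    p.2 < ∫ s in Ioc (0:ℝ) t, -(∑ j, S.q (S.Λ s p.1) j (S.X s p.1))})

/-- The first switching time `τ₁ = inf{t > 0 : Λ_t ≠ Λ_0}`. -/
def SwitchJD.switchT (S : SwitchJD d m Ω) (ω : Ω) : ℝ≥0∞ :=
  sInf (ENNReal.ofReal '' {t : ℝ | 0 < t ∧ S.Λ t ω ≠ S.Λ 0 ω})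

/-- `E_{x,i}[ g(X_{τ_D}, Λ_{τ_D}) ; τ_D < ∞ ]` for the switched process (with the convention
that any function vanishes at the cemetery point `∂`, i.e. on `{τ_D ≥ ζ}`). -/
def SwitchJD.stopExp (S : SwitchJD d m Ω) (g : Rd d → Fin m → ℝ) (D : Set (Rd d))
    (x : Rd d) (i : Fin m) : ℝ :=
  ∫ p, (if exitT S.X D p.1 < S.life p then
      g (S.X (exitT S.X D p.1).toReal p.1) (S.Λ (exitT S.X D p.1).toReal p.1) else 0)
    ∂((S.P x i).prod expM)

/-- First exit time of the pair `(X_t, Λ_t)` from `V ⊆ ℝ^d × M`, `V` being encoded by its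
sections `V i ⊆ ℝ^d`. -/
def exitVP (X : ℝ → Ω → Rd d) (Λ : ℝ → Ω → Fin m) (V : Fin m → Set (Rd d)) (ω : Ω) : ℝ≥0∞ :=
  sInf (ENNReal.ofReal '' {t : ℝ | 0 ≤ t ∧ X t ω ∉ V (Λ t ω)})

/-- `f` is `G`-harmonic in `U = D × M`: for every relatively compact open `V ⊆ U`,
`f(x,i) = E_{x,i}[f(X_{τ_V}, Λ_{τ_V})]` for all `(x,i) ∈ V`. -/
def SwitchJD.Harmonic (S : SwitchJD d m Ω) (f : Rd d → Fin m → ℝ) (D : Set (Rd d)) : Prop :=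
  ∀ V : Fin m → Set (Rd d), (∀ i, IsOpen (V i)) → (∀ i, IsCompact (closure (V i))) →
    (∀ i, closure (V i) ⊆ D) →
    ∀ x i, x ∈ V i →
      f x i = ∫ p, (if exitVP S.X S.Λ V p.1 < S.life p then
          f (S.X (exitVP S.X S.Λ V p.1).toReal p.1) (S.Λ (exitVP S.X S.Λ V p.1).toReal p.1)
        else 0) ∂((S.P x i).prod expM)

/-- The matrix `Q(x) = (q_{ij}(x))` is irreducible on `D`: for any `i, j` there are
`n ≥ 1` and `Λ₀ = i, Λ₁, …, Λ_n = j` with `Λ_{k−1} ≠ Λ_k` such that each set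
`{x ∈ D : q_{Λ_{k−1} Λ_k}(x) > 0}` has positive Lebesgue measure. -/
def QIrreducible {d m : ℕ} (q : Fin m → Fin m → Rd d → ℝ) (D : Set (Rd d)) : Prop :=
  ∀ i j : Fin m, ∃ n : ℕ, 0 < n ∧ ∃ c : Fin (n + 1) → Fin m,
    c 0 = i ∧ c (Fin.last n) = j ∧ (∀ k : Fin n, c k.castSucc ≠ c k.succ) ∧
    ∀ k : Fin n, 0 < volume {x ∈ D | 0 < q (c k.castSucc) (c k.succ) x}

/-- `G` (i.e. `Q`) is strictly irreducible on `D`: for `i ≠ j`, `inf_D q_{ij} ≥ q⁰_{ij} > 0`. -/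
def StrictIrred {d m : ℕ} (q : Fin m → Fin m → Rd d → ℝ) (D : Set (Rd d)) : Prop :=
  ∀ i j : Fin m, i ≠ j → ∃ q0 : ℝ, 0 < q0 ∧ ∀ x ∈ D, q0 ≤ q i j x

end

lemma my_fderiv2_apply {d : ℕ} {f : Rd d → ℝ} (hf : ContDiff ℝ 2 f) (x v w : Rd d) :
    fderiv ℝ (fun y => fderiv ℝ f y v) x w = (fderiv ℝ (fderiv ℝ f) x w) v := by
  have hc : DifferentiableAt ℝ (fderiv ℝ f) x :=
    ((hf.fderiv_right (m := 1) (by norm_num)).differentiable one_ne_zero).differentiableAt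
  rw [fderiv_clm_apply hc (differentiableAt_const v)]
  simp

lemma my_coord_le_norm {d : ℕ} (v : Rd d) (k : Fin d) : |v k| ≤ ‖v‖ := by
  rw [EuclideanSpace.norm_eq]
  have h1 : |v k| = Real.sqrt (‖v k‖ ^ 2) := by
    rw [Real.sqrt_sq_eq_abs]; simp
  rw [h1]
  apply Real.sqrt_le_sqrt
  exact Finset.single_le_sum (f := fun i => ‖v i‖ ^ 2) (fun i _ => by positivity)
    (Finset.mem_univ k)

lemma my_lipschitz_fderiv {d : ℕ} {f : Rd d → ℝ} (hf : ContDiff ℝ 2 f) {C : ℝ}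
    (hC : ∀ y, ‖fderiv ℝ (fderiv ℝ f) y‖ ≤ C) (x y : Rd d) :
    ‖fderiv ℝ f y - fderiv ℝ f x‖ ≤ C * ‖y - x‖ := by
  have hd : Differentiable ℝ (fderiv ℝ f) :=
    (hf.fderiv_right (m := 1) (by norm_num)).differentiable one_ne_zero
  exact (convex_univ : Convex ℝ (univ : Set (Rd d))).norm_image_sub_le_of_norm_hasFDerivWithin_le
    (fun z _ => (hd z).hasFDerivAt.hasFDerivWithinAt) (fun z _ => hC z)
    (mem_univ x) (mem_univ y)

lemma my_taylor {d : ℕ} {f : Rd d → ℝ} (hf : ContDiff ℝ 2 f) {C : ℝ}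
    (hC : ∀ y, ‖fderiv ℝ (fderiv ℝ f) y‖ ≤ C) (x z : Rd d) :
    |f (x + z) - f x - fderiv ℝ f x z| ≤ C * ‖z‖ ^ 2 := by
  have hd : Differentiable ℝ f := hf.differentiable (by norm_num)
  set g : Rd d → ℝ := fun y => f y - fderiv ℝ f x y with hg
  have hgd : ∀ y : Rd d, HasFDerivAt g (fderiv ℝ f y - fderiv ℝ f x) y := fun y =>
    (hd y).hasFDerivAt.sub (fderiv ℝ f x).hasFDerivAt
  have hb : ∀ y ∈ Metric.closedBall x ‖z‖, ‖fderiv ℝ f y - fderiv ℝ f x‖ ≤ C * ‖z‖ := by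
    intro y hy
    have h0 : (0:ℝ) ≤ C := le_trans (norm_nonneg (fderiv ℝ (fderiv ℝ f) x)) (hC x)
    have hyx : ‖y - x‖ ≤ ‖z‖ := by simpa [dist_eq_norm] using hy
    calc ‖fderiv ℝ f y - fderiv ℝ f x‖ ≤ C * ‖y - x‖ := my_lipschitz_fderiv hf hC x y
      _ ≤ C * ‖z‖ := by nlinarith
  have key : ‖g (x + z) - g x‖ ≤ (C * ‖z‖) * ‖(x + z) - x‖ :=
    (convex_closedBall x ‖z‖).norm_image_sub_le_of_norm_hasFDerivWithin_le
      (f' := fun y => fderiv ℝ f y - fderiv ℝ f x)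
      (fun y _ => (hgd y).hasFDerivWithinAt) hb
      (Metric.mem_closedBall_self (norm_nonneg z))
      (by simp [Metric.mem_closedBall, dist_eq_norm])
  have h2 : g (x + z) - g x = f (x + z) - f x - fderiv ℝ f x z := by
    simp only [hg]
    have : fderiv ℝ f x (x + z) - fderiv ℝ f x x = fderiv ℝ f x z := by
      rw [← map_sub]; congr 1; abel
    ring_nf
    linarith [this]
  rw [h2] at key
  calc |f (x + z) - f x - fderiv ℝ f x z| ≤ (C * ‖z‖) * ‖(x+z) - x‖ := key
    _ = C * ‖z‖ ^ 2 := by rw [add_sub_cancel_left]; ring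


lemma my_scale {d : ℕ} {u : Rd d → ℝ} (hu : ContDiff ℝ 2 u) {B : ℝ}
    (h1 : ∀ v, ‖fderiv ℝ u v‖ ≤ B) (h2 : ∀ v, ‖fderiv ℝ (fderiv ℝ u) v‖ ≤ B)
    (x₀ : Rd d) {r : ℝ} (hr : 0 < r) :
    ContDiff ℝ 2 (fun y => u (r⁻¹ • (y - x₀))) ∧
    (∀ y, ‖fderiv ℝ (fun y' => u (r⁻¹ • (y' - x₀))) y‖ ≤ B / r) ∧
    (∀ y, ‖fderiv ℝ (fderiv ℝ (fun y' => u (r⁻¹ • (y' - x₀)))) y‖ ≤ B / r ^ 2) := by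
  have hB : (0:ℝ) ≤ B := le_trans (norm_nonneg _) (h1 0)
  set T : Rd d → Rd d := fun y => r⁻¹ • (y - x₀) with hTdef
  set L : Rd d →L[ℝ] Rd d := r⁻¹ • ContinuousLinearMap.id ℝ (Rd d) with hLdef
  have hL : ‖L‖ ≤ r⁻¹ := by
    apply ContinuousLinearMap.opNorm_le_bound _ (inv_nonneg.2 hr.le)
    intro v
    have : L v = r⁻¹ • v := rfl
    rw [this, norm_smul, norm_inv, Real.norm_eq_abs, abs_of_nonneg hr.le]
  have hT : ∀ y, HasFDerivAt T L y := fun y =>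
    ((hasFDerivAt_id y).sub_const x₀).const_smul r⁻¹
  have hud : Differentiable ℝ u := hu.differentiable two_ne_zero
  have hu2 : Differentiable ℝ (fderiv ℝ u) :=
    (hu.fderiv_right (m := 1) (by norm_num)).differentiable one_ne_zero
  have hψ : ∀ y, HasFDerivAt (fun y' => u (T y')) ((fderiv ℝ u (T y)).comp L) y := fun y =>
    ((hud (T y)).hasFDerivAt).comp y (hT y)
  have hψ' : ∀ y, fderiv ℝ (fun y' => u (T y')) y = (fderiv ℝ u (T y)).comp L := fun y =>
    (hψ y).fderiv
  refine ⟨hu.comp (((contDiff_id.sub contDiff_const).const_smul r⁻¹)), fun y => ?_, fun y => ?_⟩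
  · rw [hψ' y]
    calc ‖(fderiv ℝ u (T y)).comp L‖ ≤ ‖fderiv ℝ u (T y)‖ * ‖L‖ :=
          ContinuousLinearMap.opNorm_comp_le _ _
      _ ≤ B * r⁻¹ := mul_le_mul (h1 _) hL (norm_nonneg _) hB
      _ = B / r := by rw [div_eq_mul_inv]
  · set R : (Rd d →L[ℝ] ℝ) →L[ℝ] (Rd d →L[ℝ] ℝ) :=
      (ContinuousLinearMap.compL ℝ (Rd d) (Rd d) ℝ).flip L with hRdef
    have hRA : ∀ A : Rd d →L[ℝ] ℝ, R A = A.comp L := fun A => rfl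
    have hR : ‖R‖ ≤ r⁻¹ := by
      apply ContinuousLinearMap.opNorm_le_bound _ (inv_nonneg.2 hr.le)
      intro A
      rw [hRA]
      calc ‖A.comp L‖ ≤ ‖A‖ * ‖L‖ := ContinuousLinearMap.opNorm_comp_le _ _
        _ ≤ ‖A‖ * r⁻¹ := mul_le_mul_of_nonneg_left hL (norm_nonneg _)
        _ = r⁻¹ * ‖A‖ := mul_comm _ _
    have hfd_eq : fderiv ℝ (fun y' => u (T y')) = fun y' => R (fderiv ℝ u (T y')) :=
      funext fun y' => by rw [hψ' y', hRA]
    have h2nd : HasFDerivAt (fun y' => R (fderiv ℝ u (T y')))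
        (R.comp ((fderiv ℝ (fderiv ℝ u) (T y)).comp L)) y :=
      R.hasFDerivAt.comp y (((hu2 (T y)).hasFDerivAt).comp y (hT y))
    rw [hfd_eq, h2nd.fderiv]
    calc ‖R.comp ((fderiv ℝ (fderiv ℝ u) (T y)).comp L)‖
        ≤ ‖R‖ * ‖(fderiv ℝ (fderiv ℝ u) (T y)).comp L‖ := ContinuousLinearMap.opNorm_comp_le _ _
      _ ≤ r⁻¹ * (B * r⁻¹) := by
          apply mul_le_mul hR ?_ (norm_nonneg ((fderiv ℝ (fderiv ℝ u) (T y)).comp L)) (inv_nonneg.2 hr.le)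
          calc ‖(fderiv ℝ (fderiv ℝ u) (T y)).comp L‖
              ≤ ‖fderiv ℝ (fderiv ℝ u) (T y)‖ * ‖L‖ := ContinuousLinearMap.opNorm_comp_le _ _
            _ ≤ B * r⁻¹ := mul_le_mul (h2 _) hL (norm_nonneg _) hB
      _ = B / r ^ 2 := by rw [sq]; field_simp

lemma my_exists_cutoff (d : ℕ) : ∃ B : ℝ, 0 ≤ B ∧ ∀ (x₀ : Rd d) (r : ℝ), 0 < r →
    ∃ χ : Rd d → ℝ, ContDiff ℝ 2 χ ∧
      (∀ y : Rd d, ‖y - x₀‖ ≤ r / 2 → χ y = 0) ∧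
      (∀ y : Rd d, 3 * r / 4 ≤ ‖y - x₀‖ → χ y = 1) ∧
      (∀ y, 0 ≤ χ y) ∧ (∀ y, χ y ≤ 1) ∧
      (∀ y, ‖fderiv ℝ χ y‖ ≤ B / r) ∧ (∀ y, ‖fderiv ℝ (fderiv ℝ χ) y‖ ≤ B / r ^ 2) := by
  set φb : ContDiffBump (0 : Rd d) := ⟨1/2, 3/4, by norm_num, by norm_num⟩ with hφb
  have hrIn : φb.rIn = 1/2 := rfl
  have hrOut : φb.rOut = 3/4 := rfl
  set φ : Rd d → ℝ := ⇑φb with hφdef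
  have hφc : ContDiff ℝ 2 φ := φb.contDiff
  have hφc' : ContDiff ℝ (⊤ : ℕ∞) φ := φb.contDiff
  have hcs : HasCompactSupport φ := φb.hasCompactSupport
  obtain ⟨B₁, hB₁⟩ : ∃ C, ∀ v, ‖fderiv ℝ φ v‖ ≤ C :=
    (hcs.fderiv ℝ).exists_bound_of_continuous (hφc'.continuous_fderiv (by simp))
  obtain ⟨B₂, hB₂⟩ : ∃ C, ∀ v, ‖fderiv ℝ (fderiv ℝ φ) v‖ ≤ C := by
    have hcs2 : HasCompactSupport (fderiv ℝ (fderiv ℝ φ)) := (hcs.fderiv ℝ).fderiv ℝ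
    have hcont : Continuous (fderiv ℝ (fderiv ℝ φ)) :=
      (hφc.fderiv_right (m := 1) (by norm_num)).continuous_fderiv one_ne_zero
    exact @HasCompactSupport.exists_bound_of_continuous (Rd d) (Rd d →L[ℝ] Rd d →L[ℝ] ℝ) _ _ _ hcs2 hcont
  set u : Rd d → ℝ := fun v => 1 - φ v with hudef
  have huc : ContDiff ℝ 2 u := contDiff_const.sub hφc
  have hdu : ∀ v, fderiv ℝ u v = -fderiv ℝ φ v := fun v => by
    rw [hudef]
    exact fderiv_const_sub 1
  have hdu' : fderiv ℝ u = fun v => -(fderiv ℝ φ v) := funext hdu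
  have hd2u : ∀ v, fderiv ℝ (fderiv ℝ u) v = -fderiv ℝ (fderiv ℝ φ) v := fun v => by
    rw [hdu']; exact fderiv_neg
  set B : ℝ := max 0 (max B₁ B₂) with hBdef
  have hBnn : 0 ≤ B := le_max_left _ _
  have hu1 : ∀ v, ‖fderiv ℝ u v‖ ≤ B := fun v => by
    rw [hdu v, norm_neg]
    exact le_trans (hB₁ v) (le_trans (le_max_left _ _) (le_max_right _ _))
  have hu2 : ∀ v, ‖fderiv ℝ (fderiv ℝ u) v‖ ≤ B := fun v => by
    rw [hd2u v, norm_neg (fderiv ℝ (fderiv ℝ φ) v)]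
    exact le_trans (hB₂ v) (le_trans (le_max_right _ _) (le_max_right _ _))
  refine ⟨B, hBnn, fun x₀ r hr => ?_⟩
  obtain ⟨hc, hb1, hb2⟩ := my_scale huc hu1 hu2 x₀ hr
  refine ⟨fun y => u (r⁻¹ • (y - x₀)), hc, fun y hy => ?_, fun y hy => ?_,
    fun y => ?_, fun y => ?_, hb1, hb2⟩
  · have : φ (r⁻¹ • (y - x₀)) = 1 := by
      apply φb.one_of_mem_closedBall
      simp only [Metric.mem_closedBall, dist_zero_right, norm_smul, norm_inv,
        Real.norm_eq_abs, abs_of_nonneg hr.le]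
      rw [inv_mul_le_iff₀ hr]
      calc ‖y - x₀‖ ≤ r / 2 := hy
        _ = r * φb.rIn := by rw [hrIn]; ring
    simp [hudef, this]
  · have : φ (r⁻¹ • (y - x₀)) = 0 := by
      apply φb.zero_of_le_dist
      simp only [dist_zero_right, norm_smul, norm_inv, Real.norm_eq_abs, abs_of_nonneg hr.le]
      rw [le_inv_mul_iff₀ hr, hrOut]
      linarith
    simp [hudef, this]
  · simp only [hudef, sub_nonneg]; exact φb.le_one
  · simp only [hudef]
    have := φb.nonneg (x := r⁻¹ • (y - x₀))
    linarith

lemma my_sampled_doob {Ω : Type} [mΩ : MeasurableSpace Ω] {μ : Measure Ω}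
    [IsProbabilityMeasure μ] {F : Filtration ℝ≥0 mΩ} {Y : ℝ≥0 → Ω → ℝ}
    (hY : Submartingale Y F μ) (hpos : ∀ s ω, 0 ≤ Y s ω) (t₁ : ℝ≥0)
    (T : Finset ℝ≥0) (hT : ∀ s ∈ T, s ≤ t₁) {ε : ℝ≥0} (hε : 0 < ε) :
    μ {ω | ∃ s ∈ T, (ε : ℝ) ≤ Y s ω} ≤ (ε : ℝ≥0∞)⁻¹ * ENNReal.ofReal (∫ ω, Y t₁ ω ∂μ) := by
  classical
  set T' : Finset ℝ≥0 := insert t₁ T with hT'def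
  have hmem : t₁ ∈ T' := Finset.mem_insert_self _ _
  have hT' : ∀ s ∈ T', s ≤ t₁ := by
    intro s hs
    rcases Finset.mem_insert.1 hs with h | h
    · exact le_of_eq h
    · exact hT s h
  set n : ℕ := T'.card - 1 with hndef
  have hcard : T'.card = n + 1 := (Nat.succ_pred_eq_of_pos (Finset.card_pos.2 ⟨t₁, hmem⟩)).symm
  set e : Fin (n + 1) ≃o {x // x ∈ T'} := T'.orderIsoOfFin hcard with hedef
  set τ : ℕ → ℝ≥0 := fun k => if h : k < n + 1 then (e ⟨k, h⟩ : ℝ≥0) else t₁ with hτdef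
  have hτle : ∀ k, τ k ≤ t₁ := by
    intro k
    by_cases h : k < n + 1
    · simp only [hτdef, dif_pos h]
      exact hT' _ (e ⟨k, h⟩).2
    · simp only [hτdef, dif_neg h, le_refl]
  have hτmono : Monotone τ := by
    intro a b hab
    by_cases hb : b < n + 1
    · have ha : a < n + 1 := lt_of_le_of_lt hab hb
      simp only [hτdef, dif_pos ha, dif_pos hb]
      exact e.monotone (by exact hab)
    · calc τ a ≤ t₁ := hτle a
        _ = τ b := by simp only [hτdef, dif_neg hb]
  have hτn : τ n = t₁ := by
    have h : n < n + 1 := n.lt_succ_self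
    have h1 : τ n = (e ⟨n, h⟩ : ℝ≥0) := by simp [hτdef, dif_pos h]
    rw [h1]
    refine le_antisymm (hT' _ (e ⟨n, h⟩).2) ?_
    have h2 : t₁ = (e (e.symm ⟨t₁, hmem⟩) : ℝ≥0) := by rw [e.apply_symm_apply]
    rw [h2]
    exact e.monotone (Fin.le_last _)
  set G : Filtration ℕ mΩ :=
    ⟨fun k => F (τ k), fun a b hab => F.mono (hτmono hab), fun k => F.le _⟩ with hGdef
  set M : ℕ → Ω → ℝ := fun k => Y (τ k) with hMdef
  have hM : Submartingale M G μ :=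
    ⟨fun k => hY.1 (τ k), fun a b hab => hY.2.1 (τ a) (τ b) (hτmono hab),
      fun k => hY.integrable _⟩
  have hMpos : 0 ≤ M := fun k ω => hpos _ ω
  have hdoob := maximal_ineq hM hMpos (ε := ε) n
  set Asup := {ω | (ε : ℝ) ≤ (Finset.range (n + 1)).sup' Finset.nonempty_range_add_one
    fun k => M k ω} with hAsup
  have hincl : {ω | ∃ s ∈ T, (ε : ℝ) ≤ Y s ω} ⊆ Asup := by
    intro ω hω
    obtain ⟨s, hsT, hsY⟩ := hω
    have hsT' : s ∈ T' := Finset.mem_insert_of_mem hsT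
    set j : Fin (n + 1) := e.symm ⟨s, hsT'⟩ with hjdef
    have hjs : τ j.1 = s := by
      have : (e ⟨j.1, j.2⟩ : ℝ≥0) = s := by
        rw [Fin.eta, hjdef, e.apply_symm_apply]
      simp only [hτdef, dif_pos j.2, this]
    refine le_trans hsY ?_
    have hjmem : j.1 ∈ Finset.range (n + 1) := Finset.mem_range.2 j.2
    have := Finset.le_sup' (fun k => M k ω) hjmem
    rw [← hjs]; exact this
  have hset : ENNReal.ofReal (∫ ω in Asup, M n ω ∂μ) ≤ ENNReal.ofReal (∫ ω, M n ω ∂μ) := by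
    apply ENNReal.ofReal_le_ofReal
    exact setIntegral_le_integral (hM.integrable n) (Filter.Eventually.of_forall fun ω => hpos _ ω)
  have key : (ε : ℝ≥0∞) * μ Asup ≤ ENNReal.ofReal (∫ ω, Y t₁ ω ∂μ) := by
    have h1 : (ε : ℝ≥0∞) * μ Asup = ε • μ Asup := rfl
    rw [h1]
    refine le_trans hdoob (le_trans hset ?_)
    rw [hMdef]
    simp only []
    rw [hτn]
  calc μ {ω | ∃ s ∈ T, (ε : ℝ) ≤ Y s ω} ≤ μ Asup := measure_mono hincl
    _ = (ε : ℝ≥0∞)⁻¹ * ((ε : ℝ≥0∞) * μ Asup) := by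
        rw [← mul_assoc, ENNReal.inv_mul_cancel (by exact_mod_cast hε.ne') ENNReal.coe_ne_top,
          one_mul]
    _ ≤ (ε : ℝ≥0∞)⁻¹ * ENNReal.ofReal (∫ ω, Y t₁ ω ∂μ) :=
        by gcongr

lemma my_Lop_const {d : ℕ} (a : Rd d → Matrix (Fin d) (Fin d) ℝ) (b : Rd d → Rd d)
    (π : Rd d → Measure (Rd d)) (x : Rd d) : Lop a b π (fun _ => (1:ℝ)) x = 0 := by
  unfold Lop
  have h0 : fderiv ℝ (fun _ : Rd d => (1:ℝ)) = 0 := fderiv_const 1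
  rw [h0]
  simp

lemma my_Lop_bound {d : ℕ} {χ : Rd d → ℝ} (hχ : ContDiff ℝ 2 χ)
    {D1 D2 : ℝ} (hD1 : ∀ y, ‖fderiv ℝ χ y‖ ≤ D1) (hD2 : ∀ y, ‖fderiv ℝ (fderiv ℝ χ) y‖ ≤ D2)
    (hχ0 : ∀ y, 0 ≤ χ y) (hχ1 : ∀ y, χ y ≤ 1)
    (a : Rd d → Matrix (Fin d) (Fin d) ℝ) {Ka : ℝ} (hKa : 0 ≤ Ka) (ha : ∀ x k l, |a x k l| ≤ Ka)
    (b : Rd d → Rd d) {Kb : ℝ} (hKb : 0 ≤ Kb) (hb : ∀ x k, |b x k| ≤ Kb)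
    (π : Rd d → Measure (Rd d)) (Pi : Measure (Rd d)) (hπ : ∀ x, π x ≤ Pi)
    (hmass : ∫⁻ z, ENNReal.ofReal (min 1 (‖z‖ ^ 2)) ∂Pi < ⊤) (x : Rd d) :
    |Lop a b π χ x| ≤ (d:ℝ)^2 * (Ka * D2) + d * (Kb * D1)
      + max D2 1 * (∫⁻ z, ENNReal.ofReal (min 1 (‖z‖ ^ 2)) ∂Pi).toReal := by
  have hD1nn : 0 ≤ D1 := le_trans (norm_nonneg _) (hD1 x)
  have hD2nn : 0 ≤ D2 := le_trans (norm_nonneg (fderiv ℝ (fderiv ℝ χ) x)) (hD2 x)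
  set I := (∫⁻ z, ENNReal.ofReal (min 1 (‖z‖ ^ 2)) ∂Pi) with hI
  set t : Fin d → Fin d → ℝ := fun k l => a x k l *
      fderiv ℝ (fun y => fderiv ℝ χ y (EuclideanSpace.single l (1:ℝ))) x
        (EuclideanSpace.single k (1:ℝ)) with ht
  set s : Fin d → ℝ := fun k => b x k * fderiv ℝ χ x (EuclideanSpace.single k (1:ℝ)) with hs
  set J : ℝ := ∫ z, (χ (x + z) - χ x - (if ‖z‖ < 1 then fderiv ℝ χ x z else 0)) ∂(π x) with hJ
  have hLop : Lop a b π χ x = (∑ k, ∑ l, t k l) + (∑ k, s k) + J := rfl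
  -- second order term
  have hterm1 : |∑ k, ∑ l, t k l| ≤ (d:ℝ)^2 * (Ka * D2) := by
    have hkl : ∀ k l : Fin d, |t k l| ≤ Ka * D2 := by
      intro k l
      rw [ht]
      simp only []
      rw [abs_mul]
      have hD : |fderiv ℝ (fun y => fderiv ℝ χ y (EuclideanSpace.single l (1:ℝ))) x
          (EuclideanSpace.single k (1:ℝ))| ≤ D2 := by
        rw [my_fderiv2_apply hχ, ← Real.norm_eq_abs]
        calc ‖(fderiv ℝ (fderiv ℝ χ) x (EuclideanSpace.single k (1:ℝ)))
              (EuclideanSpace.single l (1:ℝ))‖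
            ≤ ‖fderiv ℝ (fderiv ℝ χ) x (EuclideanSpace.single k (1:ℝ))‖ *
              ‖EuclideanSpace.single l (1:ℝ)‖ := ContinuousLinearMap.le_opNorm _ _
          _ ≤ (‖fderiv ℝ (fderiv ℝ χ) x‖ * ‖EuclideanSpace.single k (1:ℝ)‖) *
              ‖EuclideanSpace.single l (1:ℝ)‖ :=
              mul_le_mul_of_nonneg_right (ContinuousLinearMap.le_opNorm _ _) (norm_nonneg _)
          _ ≤ D2 := by
              rw [EuclideanSpace.norm_single, EuclideanSpace.norm_single]
              simpa using hD2 x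
      exact mul_le_mul (ha x k l) hD (abs_nonneg _) hKa
    calc |∑ k, ∑ l, t k l| ≤ ∑ k, |∑ l, t k l| := Finset.abs_sum_le_sum_abs _ _
      _ ≤ ∑ k, ∑ l, |t k l| := Finset.sum_le_sum fun k _ => Finset.abs_sum_le_sum_abs _ _
      _ ≤ ∑ _k : Fin d, ∑ _l : Fin d, (Ka * D2) :=
          Finset.sum_le_sum fun k _ => Finset.sum_le_sum fun l _ => hkl k l
      _ = (d:ℝ)^2 * (Ka * D2) := by
          simp only [Finset.sum_const, Finset.card_univ, Fintype.card_fin, nsmul_eq_mul]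
          ring
  -- first order term
  have hterm2 : |∑ k, s k| ≤ (d:ℝ) * (Kb * D1) := by
    have hk : ∀ k : Fin d, |s k| ≤ Kb * D1 := by
      intro k
      rw [hs]
      simp only []
      rw [abs_mul]
      have hD : |fderiv ℝ χ x (EuclideanSpace.single k (1:ℝ))| ≤ D1 := by
        rw [← Real.norm_eq_abs]
        calc ‖fderiv ℝ χ x (EuclideanSpace.single k (1:ℝ))‖
            ≤ ‖fderiv ℝ χ x‖ * ‖EuclideanSpace.single k (1:ℝ)‖ :=
              ContinuousLinearMap.le_opNorm _ _
          _ ≤ D1 := by rw [EuclideanSpace.norm_single]; simpa using hD1 x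
      exact mul_le_mul (hb x k) hD (abs_nonneg _) hKb
    calc |∑ k, s k| ≤ ∑ k, |s k| := Finset.abs_sum_le_sum_abs _ _
      _ ≤ ∑ _k : Fin d, (Kb * D1) := Finset.sum_le_sum fun k _ => hk k
      _ = (d:ℝ) * (Kb * D1) := by
          simp only [Finset.sum_const, Finset.card_univ, Fintype.card_fin, nsmul_eq_mul]
  -- nonlocal term
  have hterm3 : |J| ≤ max D2 1 * I.toReal := by
    have hptw : ∀ z : Rd d, ‖χ (x + z) - χ x - (if ‖z‖ < 1 then fderiv ℝ χ x z else 0)‖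
        ≤ max D2 1 * min 1 (‖z‖ ^ 2) := by
      intro z
      by_cases hz : ‖z‖ < 1
      · rw [if_pos hz]
        have h1 : min 1 (‖z‖ ^ 2) = ‖z‖ ^ 2 := min_eq_right (by nlinarith [norm_nonneg z])
        rw [h1, Real.norm_eq_abs]
        calc |χ (x + z) - χ x - fderiv ℝ χ x z| ≤ D2 * ‖z‖ ^ 2 := my_taylor hχ hD2 x z
          _ ≤ max D2 1 * ‖z‖ ^ 2 :=
            mul_le_mul_of_nonneg_right (le_max_left _ _) (by positivity)
      · rw [if_neg hz]
        push_neg at hz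
        have h1 : min 1 (‖z‖ ^ 2) = 1 := min_eq_left (by nlinarith)
        rw [h1, Real.norm_eq_abs, mul_one, sub_zero]
        have h2 := hχ0 (x + z); have h3 := hχ1 (x + z)
        have h4 := hχ0 x; have h5 := hχ1 x
        have habs : |χ (x + z) - χ x| ≤ 1 := abs_le.2 ⟨by linarith, by linarith⟩
        exact le_trans habs (le_max_right _ _)
    have hM : (0:ℝ) ≤ max D2 1 := le_trans zero_le_one (le_max_right _ _)
    rw [hJ, ← Real.norm_eq_abs]
    calc ‖∫ z, (χ (x + z) - χ x - (if ‖z‖ < 1 then fderiv ℝ χ x z else 0)) ∂(π x)‖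
        ≤ (∫⁻ z, ENNReal.ofReal ‖χ (x + z) - χ x -
            (if ‖z‖ < 1 then fderiv ℝ χ x z else 0)‖ ∂(π x)).toReal :=
          norm_integral_le_lintegral_norm _
      _ ≤ (ENNReal.ofReal (max D2 1) * I).toReal := by
          apply ENNReal.toReal_mono
          · exact ENNReal.mul_ne_top ENNReal.ofReal_ne_top hmass.ne
          calc ∫⁻ z, ENNReal.ofReal ‖χ (x + z) - χ x -
                (if ‖z‖ < 1 then fderiv ℝ χ x z else 0)‖ ∂(π x)
              ≤ ∫⁻ z, ENNReal.ofReal (max D2 1 * min 1 (‖z‖ ^ 2)) ∂(π x) :=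
                lintegral_mono fun z => ENNReal.ofReal_le_ofReal (hptw z)
            _ ≤ ∫⁻ z, ENNReal.ofReal (max D2 1 * min 1 (‖z‖ ^ 2)) ∂Pi :=
                lintegral_mono' (hπ x) le_rfl
            _ = ENNReal.ofReal (max D2 1) * I := by
                rw [hI, ← lintegral_const_mul' _ _ ENNReal.ofReal_ne_top]
                congr 1
                funext z
                rw [← ENNReal.ofReal_mul hM]
      _ = max D2 1 * I.toReal := by
          rw [ENNReal.toReal_mul, ENNReal.toReal_ofReal hM]
  rw [hLop]
  calc |(∑ k, ∑ l, t k l) + (∑ k, s k) + J| ≤ |(∑ k, ∑ l, t k l) + (∑ k, s k)| + |J| :=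
        abs_add_le _ _
    _ ≤ |∑ k, ∑ l, t k l| + |∑ k, s k| + |J| := by
        have := abs_add_le (∑ k, ∑ l, t k l) (∑ k, s k)
        linarith
    _ ≤ (d:ℝ)^2 * (Ka * D2) + d * (Kb * D1) + max D2 1 * I.toReal := by
        have := hterm1; have := hterm2; have := hterm3
        linarith


set_option maxHeartbeats 1600000 in
/-- Under (A1)-(A3) there exist `r̃₀ ∈ (0,1/2]` and `c > 0`, depending only
on the bounds in (A1)-(A3), such that for every `x₀ ∈ ℝ^d`, `r ∈ (0, r̃₀)`, `i ∈ M`, and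
`x ∈ B(x₀, r/2)`, `E_{x,i}(τ_{B(x₀,r)} ∧ τ₁) ≥ c r²`, where `τ₁` is the first switching
time. -/
theorem statement16 (d m : ℕ) (Ω : Type) [MeasurableSpace Ω] (S : SwitchJD d m Ω) :
    ∃ r₀ c : ℝ, 0 < r₀ ∧ r₀ ≤ 1 / 2 ∧ 0 < c ∧
      ∀ (x₀ : Rd d) (r : ℝ), 0 < r → r < r₀ →
        ∀ i : Fin m, ∀ x ∈ Metric.ball x₀ (r / 2),
          ENNReal.ofReal (c * r ^ 2) ≤
            ∫⁻ ω, min (exitT S.X (Metric.ball x₀ r) ω) (S.switchT ω) ∂(S.P x i) := by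
  classical
  rcases Nat.eq_zero_or_pos m with hm | hm
  · subst hm
    exact ⟨1/4, 1, by norm_num, by norm_num, by norm_num,
      fun x₀ r hr hr' i => i.elim0⟩
  haveI hne : Nonempty (Fin m) := ⟨⟨0, hm⟩⟩
  obtain ⟨B, hB, hcut⟩ := my_exists_cutoff d
  -- uniform bounds on the coefficients
  obtain ⟨Kσ, hσ⟩ : ∃ Kσ : ℝ, ∀ i x k l, |S.σm x i k l| ≤ Kσ := by
    choose Kf hKf using S.A1σ_bdd
    exact ⟨Finset.univ.sup' Finset.univ_nonempty Kf, fun i x k l =>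
      le_trans (hKf i x k l) (Finset.le_sup' _ (Finset.mem_univ i))⟩
  obtain ⟨Kb, hKb⟩ : ∃ Kb : ℝ, ∀ x i, ‖S.b x i‖ ≤ Kb := by
    choose Kf hKf using S.A1b_bdd
    exact ⟨Finset.univ.sup' Finset.univ_nonempty Kf, fun x i =>
      le_trans (hKf i x) (Finset.le_sup' _ (Finset.mem_univ i))⟩
  have hKbnn : 0 ≤ Kb := le_trans (norm_nonneg _) (hKb 0 ⟨0, hm⟩)
  obtain ⟨Kq, hKq⟩ : ∃ Kq : ℝ, ∀ i j x, |S.q i j x| ≤ Kq := by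
    choose Kf hKf using S.A1q_bdd
    exact ⟨Finset.univ.sup' Finset.univ_nonempty (fun p : Fin m × Fin m => Kf p.1 p.2),
      fun i j x => le_trans (hKf i j x) (Finset.le_sup' (fun p : Fin m × Fin m => Kf p.1 p.2) (Finset.mem_univ (i, j)))⟩
  have hKqnn : 0 ≤ Kq := le_trans (abs_nonneg _) (hKq ⟨0, hm⟩ ⟨0, hm⟩ 0)
  obtain ⟨Pim, hPim, hPimass⟩ := S.A3
  set κ : ℝ := (∫⁻ z, ENNReal.ofReal (min 1 (‖z‖ ^ 2)) ∂Pim).toReal with hκdef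
  have hκnn : 0 ≤ κ := ENNReal.toReal_nonneg
  have hamat : ∀ y (i' : Fin m) k l, |amat S.σm y i' k l| ≤ (d:ℝ) * Kσ ^ 2 := by
    intro y i' k l
    have : amat S.σm y i' k l = ∑ p, S.σm y i' k p * S.σm y i' l p := by
      simp [amat, Matrix.mul_apply, Matrix.transpose_apply]
    rw [this]
    calc |∑ p, S.σm y i' k p * S.σm y i' l p| ≤ ∑ p, |S.σm y i' k p * S.σm y i' l p| :=
          Finset.abs_sum_le_sum_abs _ _
      _ ≤ ∑ _p : Fin d, Kσ ^ 2 := by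
          refine Finset.sum_le_sum fun p _ => ?_
          rw [abs_mul, sq]
          have hσnn : 0 ≤ Kσ := le_trans (abs_nonneg _) (hσ i' y k p)
          exact mul_le_mul (hσ i' y k p) (hσ i' y l p) (abs_nonneg _) hσnn
      _ = (d:ℝ) * Kσ ^ 2 := by
          simp [Finset.sum_const, Finset.card_univ]
  set C₀ : ℝ := (d:ℝ)^2 * (((d:ℝ) * Kσ^2) * B) + (d:ℝ) * (Kb * B) + max B 1 * κ
      + (m:ℝ) * Kq + 1 with hC₀def
  have hC₀1 : 1 ≤ C₀ := by
    have h1 : 0 ≤ (d:ℝ)^2 * (((d:ℝ) * Kσ^2) * B) := by positivity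
    have h2 : 0 ≤ (d:ℝ) * (Kb * B) := by positivity
    have h3 : 0 ≤ max B 1 * κ := mul_nonneg (le_trans zero_le_one (le_max_right _ _)) hκnn
    have h4 : 0 ≤ (m:ℝ) * Kq := by positivity
    simp only [hC₀def]
    linarith
  have hC₀pos : 0 < C₀ := lt_of_lt_of_le one_pos hC₀1
  refine ⟨1/2, 1/(12*C₀), by norm_num, le_refl _, by positivity, ?_⟩
  intro x₀ r hr hrlt i x hx
  haveI : IsProbabilityMeasure (S.P x i) := S.isProb x i
  set μ : Measure Ω := S.P x i with hμdef
  have hrle1 : r ≤ 1 := by linarith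
  have hr2 : (0:ℝ) < r^2 := by positivity
  set K : ℝ := C₀ / r^2 with hKdef
  have hKpos : 0 < K := by positivity
  set t₀ : ℝ := r^2/(8*C₀) with ht₀def
  have ht₀pos : 0 < t₀ := by positivity
  set t₁ : ℝ := 2*t₀ with ht₁def
  have ht₁pos : 0 < t₁ := by positivity
  have hKt₁ : K * t₁ = 1/4 := by
    rw [hKdef, ht₁def, ht₀def]
    field_simp
    norm_num
  obtain ⟨χ, hχc, hχzero, hχone, hχ0, hχ1, hχd1, hχd2⟩ := hcut x₀ r hr
  set g : Rd d → Fin m → ℝ := fun y j => if j = i then χ y else 1 with hgdef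
  have hslice_i : (fun y => g y i) = χ := funext fun y => if_pos rfl
  have hslice_ne : ∀ j, j ≠ i → (fun y => g y j) = fun _ => (1:ℝ) := fun j hj =>
    funext fun y => if_neg hj
  have hg0 : ∀ y j, 0 ≤ g y j := by
    intro y j
    by_cases h : j = i
    · simp only [hgdef, if_pos h]; exact hχ0 y
    · simp only [hgdef, if_neg h]; norm_num
  have hg1 : ∀ y j, g y j ≤ 1 := by
    intro y j
    by_cases h : j = i
    · simp only [hgdef, if_pos h]; exact hχ1 y
    · simp only [hgdef, if_neg h]; exact le_refl 1
  have hgC : ∀ j, ContDiff ℝ 2 fun y => g y j := by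
    intro j
    by_cases h : j = i
    · subst h; rw [hslice_i]; exact hχc
    · rw [hslice_ne j h]; exact contDiff_const
  have hgKf : ∃ Kf : ℝ, ∀ y j, |g y j| + ‖fderiv ℝ (fun y' => g y' j) y‖ +
      ‖fderiv ℝ (fderiv ℝ fun y' => g y' j) y‖ ≤ Kf := by
    refine ⟨1 + B/r + B/r^2, fun y j => ?_⟩
    by_cases h : j = i
    · rw [h, hslice_i]
      have hgy : g y i = χ y := by simp [hgdef]
      rw [hgy]
      have h1 : |χ y| ≤ 1 := abs_le.2 ⟨by linarith [hχ0 y], hχ1 y⟩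
      have h2 := hχd1 y
      have h3 := hχd2 y
      linarith
    · rw [hslice_ne j h]
      have hgj : g y j = 1 := if_neg h
      rw [hgj]
      have h1 : fderiv ℝ (fun _ : Rd d => (1:ℝ)) = 0 := fderiv_const 1
      rw [h1]
      have h2 : fderiv ℝ (0 : Rd d → (Rd d →L[ℝ] ℝ)) = 0 := fderiv_const 0
      rw [h2]
      simp only [Pi.zero_apply, norm_zero, abs_one, add_zero, ContinuousLinearMap.opNorm_zero]
      have : 0 ≤ B/r := by positivity
      have : 0 ≤ B/r^2 := by positivity
      linarith
  -- bound on the generator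
  have hGb : ∀ y j, |Gbar S.σm S.b S.π S.q g y j| ≤ K := by
    intro y j
    have hswb : |∑ j' ∈ Finset.univ.erase j, S.q j j' y * (g y j' - g y j)| ≤ (m:ℝ) * Kq := by
      calc |∑ j' ∈ Finset.univ.erase j, S.q j j' y * (g y j' - g y j)|
          ≤ ∑ j' ∈ Finset.univ.erase j, |S.q j j' y * (g y j' - g y j)| :=
            Finset.abs_sum_le_sum_abs _ _
        _ ≤ ∑ _j' ∈ Finset.univ.erase j, Kq := by
            refine Finset.sum_le_sum fun j' _ => ?_
            rw [abs_mul]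
            have hd : |g y j' - g y j| ≤ 1 := by
              have := hg0 y j'; have := hg1 y j'; have := hg0 y j; have := hg1 y j
              exact abs_le.2 ⟨by linarith, by linarith⟩
            calc |S.q j j' y| * |g y j' - g y j| ≤ Kq * 1 :=
                  mul_le_mul (hKq j j' y) hd (abs_nonneg _) hKqnn
              _ = Kq := mul_one _
        _ ≤ (m:ℝ) * Kq := by
            rw [Finset.sum_const, nsmul_eq_mul]
            have hcard : ((Finset.univ.erase j).card : ℝ) ≤ (m:ℝ) := by
              have := Finset.card_erase_le (a := j) (s := (Finset.univ : Finset (Fin m)))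
              have h2 : (Finset.univ : Finset (Fin m)).card = m := by simp
              exact_mod_cast le_trans this (le_of_eq h2)
            exact mul_le_mul_of_nonneg_right hcard hKqnn
    have hLb : |Lop (fun y' => amat S.σm y' j) (fun y' => S.b y' j) (S.π j)
        (fun y' => g y' j) y| ≤
        (d:ℝ)^2 * (((d:ℝ) * Kσ^2) * (B/r^2)) + (d:ℝ) * (Kb * (B/r)) + max (B/r^2) 1 * κ := by
      by_cases h : j = i
      · rw [h, hslice_i]
        exact my_Lop_bound hχc hχd1 hχd2 hχ0 hχ1 _ (by positivity)
          (fun x' k l => hamat x' i k l) _ hKbnn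
          (fun x' k => le_trans (my_coord_le_norm _ k) (hKb x' i)) _ Pim (hPim i) hPimass y
      · rw [hslice_ne j h, my_Lop_const]
        have h1 : (0:ℝ) ≤ (d:ℝ)^2 * (((d:ℝ) * Kσ^2) * (B/r^2)) := by positivity
        have h2 : (0:ℝ) ≤ (d:ℝ) * (Kb * (B/r)) := by positivity
        have h3 : (0:ℝ) ≤ max (B/r^2) 1 * κ :=
          mul_nonneg (le_trans zero_le_one (le_max_right _ _)) hκnn
        rw [abs_zero]
        linarith
    have hGeq : Gbar S.σm S.b S.π S.q g y j =
        Lop (fun y' => amat S.σm y' j) (fun y' => S.b y' j) (S.π j) (fun y' => g y' j) y +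
        ∑ j' ∈ Finset.univ.erase j, S.q j j' y * (g y j' - g y j) := rfl
    have htot := abs_add_le
      (Lop (fun y' => amat S.σm y' j) (fun y' => S.b y' j) (S.π j) (fun y' => g y' j) y)
      (∑ j' ∈ Finset.univ.erase j, S.q j j' y * (g y j' - g y j))
    -- algebraic comparison with K = C₀ / r²
    have hr21 : r^2 ≤ 1 := by nlinarith
    have hr2r : r^2 ≤ r := by nlinarith
    have hdiv : ∀ a : ℝ, 0 ≤ a → a ≤ a / r^2 := fun a ha => by
      rw [le_div_iff₀ hr2]
      nlinarith [mul_le_mul_of_nonneg_left hr21 ha]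
    have hdivr : ∀ a : ℝ, 0 ≤ a → a / r ≤ a / r^2 := fun a ha => by
      rw [div_le_div_iff₀ hr hr2]
      nlinarith [mul_le_mul_of_nonneg_left hr2r ha]
    have hmax : max (B/r^2) 1 ≤ max B 1 / r^2 := by
      apply max_le
      · gcongr
        exact le_max_left _ _
      · rw [le_div_iff₀ hr2]
        have := le_max_right B 1
        nlinarith
    have habs0 : |Gbar S.σm S.b S.π S.q g y j| ≤
        |Lop (fun y' => amat S.σm y' j) (fun y' => S.b y' j) (S.π j) (fun y' => g y' j) y| +
        |∑ j' ∈ Finset.univ.erase j, S.q j j' y * (g y j' - g y j)| := by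
      rw [hGeq]; exact htot
    have e1 : (d:ℝ)^2 * (((d:ℝ)*Kσ^2)*(B/r^2)) = ((d:ℝ)^2 * (((d:ℝ) * Kσ^2) * B))/r^2 := by
      ring
    have e2 : (d:ℝ)*(Kb*(B/r)) = ((d:ℝ) * (Kb * B))/r := by ring
    have i2 : ((d:ℝ) * (Kb * B))/r ≤ ((d:ℝ) * (Kb * B))/r^2 := hdivr _ (by positivity)
    have i3 : max (B/r^2) 1 * κ ≤ (max B 1 * κ)/r^2 := by
      calc max (B/r^2) 1 * κ ≤ (max B 1 / r^2) * κ := mul_le_mul_of_nonneg_right hmax hκnn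
        _ = (max B 1 * κ)/r^2 := by ring
    have i4 : (m:ℝ) * Kq ≤ ((m:ℝ) * Kq)/r^2 := hdiv _ (by positivity)
    have eK : K = ((d:ℝ)^2 * (((d:ℝ) * Kσ^2) * B))/r^2 + ((d:ℝ) * (Kb * B))/r^2
        + (max B 1 * κ)/r^2 + ((m:ℝ) * Kq)/r^2 + 1/r^2 := by
      rw [hKdef, hC₀def]; ring
    have hpos : (0:ℝ) ≤ 1/r^2 := by positivity
    linarith [hLb, hswb, habs0]
  -- the martingale from the martingale problem
  set N : ℝ≥0 → Ω → ℝ := fun t ω => g (S.X (t:ℝ) ω) (S.Λ (t:ℝ) ω) -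
      ∫ s in Ioc (0:ℝ) (t:ℝ), Gbar S.σm S.b S.π S.q g (S.X s ω) (S.Λ s ω) with hNdef
  have hNmart : Martingale N S.F μ := S.mart g hgC hgKf x i
  have hA : ∀ (t : ℝ≥0) (ω : Ω),
      |∫ s in Ioc (0:ℝ) (t:ℝ), Gbar S.σm S.b S.π S.q g (S.X s ω) (S.Λ s ω)| ≤ K * (t:ℝ) := by
    intro t ω
    have hfin : volume (Ioc (0:ℝ) (t:ℝ)) < ⊤ := by
      rw [Real.volume_Ioc]; exact ENNReal.ofReal_lt_top
    calc |∫ s in Ioc (0:ℝ) (t:ℝ), Gbar S.σm S.b S.π S.q g (S.X s ω) (S.Λ s ω)|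
        ≤ ∫ s in Ioc (0:ℝ) (t:ℝ), ‖Gbar S.σm S.b S.π S.q g (S.X s ω) (S.Λ s ω)‖ := by
          rw [← Real.norm_eq_abs]
          exact norm_integral_le_integral_norm _
      _ ≤ ∫ _s in Ioc (0:ℝ) (t:ℝ), K := by
          have hbd : ∀ s : ℝ, ‖Gbar S.σm S.b S.π S.q g (S.X s ω) (S.Λ s ω)‖ ≤ K := fun s => by
            rw [Real.norm_eq_abs]; exact hGb _ _
          exact integral_mono_of_nonneg (Eventually.of_forall fun s => norm_nonneg _)
            (integrableOn_const hfin.ne) (Eventually.of_forall hbd)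
      _ = K * (t:ℝ) := by
          rw [setIntegral_const, smul_eq_mul, mul_comm]
          simp [Measure.real, Real.volume_Ioc]
  -- the starting event
  set S₀ : Set Ω := {ω | S.X 0 ω = x ∧ S.Λ 0 ω = i} with hS₀def
  have hS₀meas : MeasurableSet S₀ := by
    have h1 : S₀ = (S.X 0) ⁻¹' {x} ∩ (S.Λ 0) ⁻¹' {i} := by
      ext ω; simp [hS₀def, Set.mem_preimage]
    rw [h1]
    exact (S.measX 0 (measurableSet_singleton x)).inter (S.measΛ 0 (measurableSet_singleton i))
  have hstart : μ S₀ = 1 := S.start x i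
  have hN0 : ∀ ω, ω ∈ S₀ → N 0 ω = 0 := by
    intro ω hω
    have h1 : ((0:ℝ≥0):ℝ) = (0:ℝ) := rfl
    have h2 : N 0 ω = g (S.X 0 ω) (S.Λ 0 ω) -
        ∫ s in Ioc (0:ℝ) (0:ℝ), Gbar S.σm S.b S.π S.q g (S.X s ω) (S.Λ s ω) := rfl
    rw [h2, Set.Ioc_self, Measure.restrict_empty, integral_zero_measure, sub_zero,
      hω.1, hω.2]
    have h3 : g x i = χ x := by simp [hgdef]
    rw [h3]
    apply hχzero
    rw [← dist_eq_norm]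
    exact le_of_lt (by simpa [Metric.mem_ball] using hx)
  have hN0ae : N 0 =ᵐ[μ] 0 := by
    have hc : μ S₀ᶜ = 0 := by
      rw [measure_compl hS₀meas (measure_ne_top _ _), hstart, measure_univ, tsub_self]
    have hae : ∀ᵐ ω ∂μ, ω ∈ S₀ := by
      rw [ae_iff]
      exact hc
    exact hae.mono fun ω hω => hN0 ω hω
  set s₁ : ℝ≥0 := Real.toNNReal t₁ with hs₁def
  have hs₁ : ((s₁:ℝ≥0):ℝ) = t₁ := Real.coe_toNNReal _ ht₁pos.le
  have hEN : ∫ ω, N s₁ ω ∂μ = 0 := by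
    have hce := hNmart.2 0 s₁ (by positivity)
    calc ∫ ω, N s₁ ω ∂μ = ∫ ω, (μ[N s₁| S.F 0]) ω ∂μ := (integral_condExp (S.F.le 0)).symm
      _ = ∫ ω, N 0 ω ∂μ := integral_congr_ae hce
      _ = ∫ _ω, (0:ℝ) ∂μ := integral_congr_ae hN0ae
      _ = 0 := integral_zero _ _
  have hNlb : ∀ ω, -(1/4:ℝ) ≤ N s₁ ω := by
    intro ω
    have h2 : N s₁ ω = g (S.X ((s₁:ℝ≥0):ℝ) ω) (S.Λ ((s₁:ℝ≥0):ℝ) ω) -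
        ∫ s in Ioc (0:ℝ) ((s₁:ℝ≥0):ℝ), Gbar S.σm S.b S.π S.q g (S.X s ω) (S.Λ s ω) := rfl
    have h3 := (abs_le.1 (hA s₁ ω)).2
    have h4 : K * ((s₁:ℝ≥0):ℝ) = 1/4 := by rw [hs₁]; exact hKt₁
    have h5 := hg0 (S.X ((s₁:ℝ≥0):ℝ) ω) (S.Λ ((s₁:ℝ≥0):ℝ) ω)
    rw [h2]
    linarith
  set Y : ℝ≥0 → Ω → ℝ := fun s ω => max (N s ω) 0 with hYdef
  have hYsub : Submartingale Y S.F μ := by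
    have h1 : Submartingale (N ⊔ 0) S.F μ :=
      hNmart.submartingale.sup (martingale_zero _ _ _).submartingale
    have h2 : Y = N ⊔ 0 := by funext s ω; rfl
    rw [h2]; exact h1
  have hYapp : ∀ s ω, Y s ω = max (N s ω) 0 := fun s ω => rfl
  have hYpos : ∀ s ω, 0 ≤ Y s ω := fun s ω => by rw [hYapp]; exact le_max_right _ _
  have hEY : ∫ ω, Y s₁ ω ∂μ ≤ 1/4 := by
    have hint1 : Integrable (N s₁) μ := hNmart.integrable s₁
    have hle : Y s₁ ≤ fun ω => N s₁ ω + 1/4 := by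
      intro ω
      rw [hYapp]
      exact max_le (by linarith [hNlb ω]) (by linarith [hNlb ω])
    calc ∫ ω, Y s₁ ω ∂μ ≤ ∫ ω, (N s₁ ω + 1/4) ∂μ :=
          integral_mono (hYsub.integrable s₁) (hint1.add (integrable_const _)) hle
      _ = ∫ ω, N s₁ ω ∂μ + 1/4 := by
          rw [integral_add hint1 (integrable_const _), integral_const]
          simp
      _ ≤ 1/4 := by rw [hEN]; norm_num
  have hDoob : ∀ T : Finset ℝ≥0, (∀ s ∈ T, s ≤ s₁) →
      μ {ω | ∃ s ∈ T, (3/4:ℝ) ≤ Y s ω} ≤ ENNReal.ofReal (1/3) := by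
    intro T hT
    have h1 := my_sampled_doob hYsub hYpos s₁ T hT (ε := (3/4 : ℝ≥0)) (by norm_num)
    refine le_trans h1 ?_
    have hco : (((3/4 : ℝ≥0)):ℝ≥0∞) = ENNReal.ofReal (3/4) := by
      rw [← ENNReal.ofReal_coe_nnreal]
      norm_num
    calc (((3/4 : ℝ≥0)):ℝ≥0∞)⁻¹ * ENNReal.ofReal (∫ ω, Y s₁ ω ∂μ)
        ≤ (((3/4 : ℝ≥0)):ℝ≥0∞)⁻¹ * ENNReal.ofReal (1/4) :=
          by gcongr
      _ = ENNReal.ofReal (1/3) := by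
          rw [hco, ← ENNReal.ofReal_inv_of_pos (by norm_num : (0:ℝ) < 3/4),
            ← ENNReal.ofReal_mul (by norm_num : (0:ℝ) ≤ (3/4:ℝ)⁻¹)]
          norm_num
  -- countable union over rational times
  set en : ℕ ≃ ℚ := (Denumerable.eqv ℚ).symm with hendef
  set ρ : ℕ → ℝ≥0 := fun k => Real.toNNReal (max 0 (min ((en k : ℚ):ℝ) t₁)) with hρdef
  have hρle : ∀ k, ρ k ≤ s₁ := by
    intro k
    apply Real.toNNReal_mono
    exact max_le ht₁pos.le (min_le_right _ _)
  have hρs : ∀ qq : ℚ, 0 ≤ (qq:ℝ) → (qq:ℝ) ≤ t₁ → ((ρ (en.symm qq) : ℝ≥0) : ℝ) = (qq:ℝ) := by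
    intro qq h0 h1
    rw [hρdef]
    simp only [Equiv.apply_symm_apply]
    rw [min_eq_left h1, max_eq_right h0, Real.coe_toNNReal _ h0]
  set A : ℕ → Set Ω := fun k => {ω | (3/4:ℝ) ≤ N (ρ k) ω} with hAdef
  have hAmeas : ∀ k, MeasurableSet (A k) := fun k =>
    measurableSet_le measurable_const
      (Measurable.le (S.F.le (ρ k)) (hNmart.1 (ρ k)).measurable)
  set U : Set Ω := ⋃ k, A k with hUdef
  have hU : μ U ≤ ENNReal.ofReal (1/3) := by
    rw [hUdef, measure_iUnion_eq_iSup_accumulate]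
    apply iSup_le
    intro n
    have hsub : Set.accumulate A n ⊆
        {ω | ∃ s ∈ (Finset.range (n+1)).image ρ, (3/4:ℝ) ≤ Y s ω} := by
      intro ω hω
      obtain ⟨k, hk, hωk⟩ := Set.mem_accumulate.1 hω
      exact ⟨ρ k, Finset.mem_image_of_mem ρ (Finset.mem_range.2 (Nat.lt_succ_of_le hk)),
        le_trans hωk (by rw [hYapp]; exact le_max_left _ _)⟩
    refine le_trans (measure_mono hsub) (hDoob _ ?_)
    intro s hs
    obtain ⟨k, _, rfl⟩ := Finset.mem_image.1 hs
    exact hρle k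
  set G : Set Ω := S₀ \ U with hGdef2
  have hGmeas : MeasurableSet G := hS₀meas.diff (MeasurableSet.iUnion hAmeas)
  have hμG : ENNReal.ofReal (2/3) ≤ μ G := by
    have h1 : μ S₀ - μ U ≤ μ G := le_measure_diff
    have h2 : ENNReal.ofReal (2/3) ≤ μ S₀ - μ U := by
      rw [hstart]
      refine ENNReal.le_sub_of_add_le_right (ne_top_of_le_ne_top ENNReal.ofReal_ne_top hU) ?_
      calc ENNReal.ofReal (2/3) + μ U ≤ ENNReal.ofReal (2/3) + ENNReal.ofReal (1/3) :=
            add_le_add le_rfl hU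
        _ = 1 := by
            rw [← ENNReal.ofReal_add (by norm_num) (by norm_num)]
            norm_num
    exact le_trans h2 h1
  -- pointwise claim on good set
  have hclaim : ∀ ω, ω ∈ G → ∀ s : ℝ, 0 ≤ s → s ≤ t₁ → (∃ qq : ℚ, (qq:ℝ) = s) →
      S.Λ s ω = i ∧ ‖S.X s ω - x₀‖ < 3*r/4 := by
    rintro ω hω s hs0 hs1 ⟨qq, hqq⟩
    set k : ℕ := en.symm qq with hkdef
    have hρk : ((ρ k : ℝ≥0) : ℝ) = s := by
      rw [hkdef, hρs qq (hqq ▸ hs0) (hqq ▸ hs1), hqq]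
    have hωA : ω ∉ A k := fun hA' => hω.2 (Set.mem_iUnion.2 ⟨k, hA'⟩)
    have hNk : N (ρ k) ω < 3/4 := lt_of_not_ge hωA
    have hAk := (abs_le.1 (hA (ρ k) ω)).2
    have hKs : K * ((ρ k:ℝ≥0):ℝ) ≤ 1/4 := by
      rw [hρk]
      calc K * s ≤ K * t₁ := mul_le_mul_of_nonneg_left hs1 hKpos.le
        _ = 1/4 := hKt₁
    have hNeq : N (ρ k) ω = g (S.X ((ρ k:ℝ≥0):ℝ) ω) (S.Λ ((ρ k:ℝ≥0):ℝ) ω) -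
        ∫ u in Ioc (0:ℝ) ((ρ k:ℝ≥0):ℝ), Gbar S.σm S.b S.π S.q g (S.X u ω) (S.Λ u ω) := rfl
    have hgval : g (S.X s ω) (S.Λ s ω) < 1 := by
      rw [← hρk]
      have h1 : g (S.X ((ρ k:ℝ≥0):ℝ) ω) (S.Λ ((ρ k:ℝ≥0):ℝ) ω) = N (ρ k) ω +
          ∫ u in Ioc (0:ℝ) ((ρ k:ℝ≥0):ℝ), Gbar S.σm S.b S.π S.q g (S.X u ω) (S.Λ u ω) := by
        rw [hNeq]; ring
      rw [h1]
      linarith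
    have hΛ : S.Λ s ω = i := by
      by_contra hΛne
      have : g (S.X s ω) (S.Λ s ω) = 1 := by simp [hgdef, hΛne]
      linarith
    refine ⟨hΛ, ?_⟩
    by_contra hX
    push_neg at hX
    have : g (S.X s ω) (S.Λ s ω) = 1 := by
      simp only [hgdef, hΛ, if_pos]
      exact hχone _ hX
    linarith
  -- exit time lower bound on G
  have hexit : ∀ ω, ω ∈ G → ENNReal.ofReal t₀ ≤ exitT S.X (Metric.ball x₀ r) ω := by
    intro ω hω
    apply le_sInf
    rintro b ⟨t, ⟨ht0, htX⟩, rfl⟩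
    apply ENNReal.ofReal_le_ofReal
    by_contra hlt
    push_neg at hlt
    have hc := S.right_cont ω t
    rw [Metric.continuousWithinAt_iff] at hc
    obtain ⟨δ, hδ, hcd⟩ := hc (r/4) (by positivity)
    obtain ⟨qq, hq1, hq2⟩ := exists_rat_btwn (show t < min (t+δ) t₀ from lt_min (by linarith) hlt)
    have hs0 : 0 ≤ (qq:ℝ) := le_trans ht0 hq1.le
    have hs1 : (qq:ℝ) ≤ t₁ := by
      have := lt_of_lt_of_le hq2 (min_le_right _ _)
      rw [ht₁def]; linarith
    obtain ⟨hΛq, hXq⟩ := hclaim ω hω qq hs0 hs1 ⟨qq, rfl⟩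
    have hdist : dist (S.X (qq:ℝ) ω) (S.X t ω) < r/4 := by
      apply hcd (mem_Ici.2 hq1.le)
      rw [Real.dist_eq, abs_of_nonneg (by linarith : (0:ℝ) ≤ (qq:ℝ) - t)]
      have := lt_of_lt_of_le hq2 (min_le_left _ _)
      linarith
    have hXt : r ≤ dist (S.X t ω) x₀ := by
      simpa [Metric.mem_ball, not_lt] using htX
    have htri : dist (S.X t ω) x₀ ≤ dist (S.X t ω) (S.X (qq:ℝ) ω) + dist (S.X (qq:ℝ) ω) x₀ :=
      dist_triangle _ _ _
    rw [dist_comm] at hdist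
    have h5 : dist (S.X (qq:ℝ) ω) x₀ < 3*r/4 := by rw [dist_eq_norm]; exact hXq
    linarith
  -- switching time lower bound on G
  have hswitch : ∀ ω, ω ∈ G → ENNReal.ofReal t₀ ≤ S.switchT ω := by
    intro ω hω
    apply le_sInf
    rintro b ⟨t, ⟨ht0, htΛ⟩, rfl⟩
    apply ENNReal.ofReal_le_ofReal
    by_contra hlt
    push_neg at hlt
    obtain ⟨ε, hε, hcons⟩ := S.right_contΛ ω t
    obtain ⟨qq, hq1, hq2⟩ := exists_rat_btwn (show t < min (t+ε) t₀ from lt_min (by linarith) hlt)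
    have hs0 : 0 ≤ (qq:ℝ) := le_trans ht0.le hq1.le
    have hs1 : (qq:ℝ) ≤ t₁ := by
      have := lt_of_lt_of_le hq2 (min_le_right _ _)
      rw [ht₁def]; linarith
    obtain ⟨hΛq, _⟩ := hclaim ω hω qq hs0 hs1 ⟨qq, rfl⟩
    have hq3 : (qq:ℝ) ∈ Ico t (t+ε) := ⟨hq1.le, lt_of_lt_of_le hq2 (min_le_left _ _)⟩
    rw [hcons _ hq3] at hΛq
    exact htΛ (hΛq.trans hω.1.2.symm)
  -- conclusion
  have hptw : ∀ ω, (G.indicator (fun _ => ENNReal.ofReal t₀)) ω ≤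
      min (exitT S.X (Metric.ball x₀ r) ω) (S.switchT ω) := by
    intro ω
    by_cases hω : ω ∈ G
    · rw [Set.indicator_of_mem hω]
      exact le_min (hexit ω hω) (hswitch ω hω)
    · rw [Set.indicator_of_notMem hω]
      exact (by simp)
  calc ENNReal.ofReal (1/(12*C₀) * r^2)
      = ENNReal.ofReal (t₀ * (2/3)) := by
        congr 1
        rw [ht₀def]
        field_simp
        ring
    _ = ENNReal.ofReal t₀ * ENNReal.ofReal (2/3) := ENNReal.ofReal_mul ht₀pos.le
    _ ≤ ENNReal.ofReal t₀ * μ G := by gcongr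
    _ = ∫⁻ _ω in G, ENNReal.ofReal t₀ ∂μ := by rw [setLIntegral_const, mul_comm]
    _ = ∫⁻ ω, G.indicator (fun _ => ENNReal.ofReal t₀) ω ∂μ := by
        rw [lintegral_indicator hGmeas]
    _ ≤ ∫⁻ ω, min (exitT S.X (Metric.ball x₀ r) ω) (S.switchT ω) ∂μ := lintegral_mono hptw
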